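/- Let G = (V, D, B) be a DMG and let d be the maximum degree of its directed skeleton G^u. Then there exists an adjacent separating system on (V, D) with at most 4d² elements. -/

import Mathlib

universe u

/-- A directed mixed graph (DMG): directed edges `D` (no self-loops) and
bidirected edges `B` (symmetric, no self-loops). -/
structure DMG (V : Type u) where
  D : V → V → Prop
  B : V → V → Prop
  D_irrefl : ∀ x, ¬ D x x
  B_symm : ∀ x y, B x y → B y x
  B_irrefl : ∀ x, ¬ B x x

namespace DMG

variable {V : Type u}

/-- `x` is an ancestor of `y` (reflexive-transitive closure of `D`). -/
def anc (G : DMG V) (x y : V) : Prop := Relation.ReflTransGen G.D x y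

/-- ancestors of a set of vertices -/
def ancSet (G : DMG V) (W : Set V) : Set V := {x | ∃ y ∈ W, G.anc x y}

/-- the strongly connected component of `x` -/
def scc (G : DMG V) (x : V) : Set V := {y | G.anc x y ∧ G.anc y x}

/-- parents of a vertex -/
def pa (G : DMG V) (x : V) : Set V := {y | G.D y x}

/-- parents of a set of vertices -/
def paSet (G : DMG V) (W : Set V) : Set V := {y | ∃ x ∈ W, G.D y x}

/-- non-adjacent bidirected edges -/
def BN (G : DMG V) : V → V → Prop := fun x y => G.B x y ∧ ¬ G.D x y ∧ ¬ G.D y x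

/-- the intervened graph `G_Ī` -/
def intervene (G : DMG V) (I : Set V) : DMG V where
  D a b := G.D a b ∧ b ∉ I
  B a b := G.B a b ∧ a ∉ I ∧ b ∉ I
  D_irrefl := fun x h => G.D_irrefl x h.1
  B_symm := fun x y h => ⟨G.B_symm x y h.1, h.2.2, h.2.1⟩
  B_irrefl := fun x h => G.B_irrefl x h.1

/-- the directed skeleton `G^u` -/
def skel (G : DMG V) : SimpleGraph V where
  Adj x y := x ≠ y ∧ (G.D x y ∨ G.D y x)
  symm := ⟨fun _ _ h => ⟨h.1.symm, h.2.elim Or.inr Or.inl⟩⟩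
  loopless := ⟨fun _ h => h.1 rfl⟩

/-- the undirected component graph `G^{uc}` -/
def ucomp (G : DMG V) : SimpleGraph V where
  Adj x y := x ≠ y ∧ ¬ G.D x y ∧ ¬ G.D y x
  symm := ⟨fun _ _ h => ⟨h.1.symm, h.2.2, h.2.1⟩⟩
  loopless := ⟨fun _ h => h.1 rfl⟩

/-- `S` is an SCC of `G` -/
def isSCC (G : DMG V) (S : Set V) : Prop := ∃ x, S = G.scc x

/-- `S` is an SCC-ancestor of the distinct SCC `S'` -/
def sccAncestor (G : DMG V) (S S' : Set V) : Prop :=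
  S ≠ S' ∧ ∃ x ∈ S, ∃ y ∈ S', G.anc x y

/-- `S` is a `k`-order SCC-ancestor of `S'`: there is a directed path from a
vertex of `S` to a vertex of `S'` passing through at most `k-1` SCCs other than
`S` and `S'`. -/
def kOrderSCCAnc (G : DMG V) (k : ℕ) (S S' : Set V) : Prop :=
  S ≠ S' ∧ ∃ p : List V, p ≠ [] ∧ p.Chain' G.D ∧
    (∃ x ∈ S, p.head? = some x) ∧ (∃ y ∈ S', p.getLast? = some y) ∧
    ({C : Set V | ∃ z ∈ p, z ∉ S ∧ z ∉ S' ∧ C = G.scc z}).ncard ≤ k - 1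

/-- `G` has SCC-Anc length `l` : `l` is the least integer such that every
SCC-ancestor of any SCC is an `l`-order SCC-ancestor. -/
def sccAncLength (G : DMG V) (l : ℕ) : Prop :=
  IsLeast {m | ∀ S S' : Set V, G.isSCC S → G.isSCC S' →
    G.sccAncestor S' S → G.kOrderSCCAnc m S' S} l

/-- membership in the first layer `𝒯_1` of the SCC-Anc partition -/
def sccLayer0 (G : DMG V) (S : Set V) : Prop :=
  G.isSCC S ∧ ¬ ∃ S' : Set V, G.isSCC S' ∧ G.sccAncestor S' S

/-- `m` is the least order at which `S'` is an SCC-ancestor of `S` -/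
def minOrd (G : DMG V) (S' S : Set V) (m : ℕ) : Prop :=
  IsLeast {j | G.kOrderSCCAnc j S' S} m

/-- membership in the layer `𝒯_{i+1}` of the SCC-Anc partition (0-indexed `i`):
for `i ≥ 1`, `S ∈ 𝒯_{i+1}` iff some SCC of `𝒯_1` is an `i`-order SCC-ancestor
of `S` and no SCC of `𝒯_1` is only an `r`-order SCC-ancestor of `S` for `r > i`,
i.e. `i` is the largest minimal order of a `𝒯_1` SCC-ancestor of `S`. -/
def sccLayer (G : DMG V) (i : ℕ) (S : Set V) : Prop :=
  if i = 0 then G.sccLayer0 S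
  else G.isSCC S ∧ IsGreatest {m | ∃ S' : Set V, G.sccLayer0 S' ∧ G.minOrd S' S m} i

/-- `T_{k+1}` (0-indexed `k`): the set of vertices in layers `𝒯_1, …, 𝒯_k` -/
def TUnion (G : DMG V) (k : ℕ) : Set V :=
  {v | ∃ i < k, ∃ S : Set V, G.sccLayer i S ∧ v ∈ S}

/-- SCC-Anc separating system on `(V, 𝕋^G)` (layers 0-indexed by `0,…,l`) -/
def SCCAncSepSystem (G : DMG V) (l : ℕ) (𝓘 : Set (Set V)) : Prop :=
  ∀ k ≤ l, ∀ S : Set V, G.sccLayer k S → ∀ X ∈ S,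
    ∃ I ∈ 𝓘, (G.TUnion k ∪ S) \ {X} ⊆ I ∧ X ∉ I

/-- `G` with the directed edge `(F, S)` removed -/
def removeDir (G : DMG V) (F S : V) : DMG V where
  D a b := G.D a b ∧ ¬(a = F ∧ b = S)
  B := G.B
  D_irrefl := fun x h => G.D_irrefl x h.1
  B_symm := G.B_symm
  B_irrefl := fun x h => G.B_irrefl x h

/-- `G` with the bidirected edge `{S, R}` removed -/
def removeBi (G : DMG V) (S R : V) : DMG V where
  D := G.D
  B a b := G.B a b ∧ ¬((a = S ∧ b = R) ∨ (a = R ∧ b = S))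
  D_irrefl := G.D_irrefl
  B_symm := by
    intro x y h
    refine ⟨G.B_symm x y h.1, ?_⟩
    rintro (⟨h1, h2⟩ | ⟨h1, h2⟩)
    · exact h.2 (Or.inr ⟨h2, h1⟩)
    · exact h.2 (Or.inl ⟨h2, h1⟩)
  B_irrefl := fun x h => G.B_irrefl x h.1

end DMG

/-- kinds of edges along a mixed path: forward directed, backward directed, bidirected -/
inductive EKind | fwd | bwd | bi

/-- a mixed path skeleton: `k ≥ 1` steps, vertices `Z 0, …, Z k`, edges `E 0, …, E (k-1)`
(step `i` joins `Z i` and `Z (i+1)`). -/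
structure MPath (V : Type u) where
  k : ℕ
  Z : ℕ → V
  E : ℕ → EKind
  hk : 1 ≤ k

namespace MPath

variable {V : Type u}

/-- the path is a path of `G` -/
def valid (p : MPath V) (G : DMG V) : Prop :=
  ∀ i < p.k,
    (p.E i = EKind.fwd → G.D (p.Z i) (p.Z (i+1))) ∧
    (p.E i = EKind.bwd → G.D (p.Z (i+1)) (p.Z i)) ∧
    (p.E i = EKind.bi → G.B (p.Z i) (p.Z (i+1)))

/-- the step has an arrowhead at its second endpoint -/
def headAtSnd : EKind → Prop
  | EKind.fwd => True
  | EKind.bi => True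
  | EKind.bwd => False

/-- the step has an arrowhead at its first endpoint -/
def headAtFst : EKind → Prop
  | EKind.bwd => True
  | EKind.bi => True
  | EKind.fwd => False

/-- `Z i` is a collider on the path (meaningful for `1 ≤ i ≤ k-1`) -/
def collider (p : MPath V) (i : ℕ) : Prop :=
  headAtSnd (p.E (i-1)) ∧ headAtFst (p.E i)

end MPath

/-- the separation rule: `d`-separation or `σ`-separation -/
inductive SepRule | d | s

/-- the path between `x` and `y` is `r`-blocked by `S` in `G` -/
def MPath.blocked {V : Type u} (p : MPath V) (G : DMG V) (r : SepRule) (S : Set V)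
    (x y : V) : Prop :=
  ∃ i, 1 ≤ i ∧ i < p.k ∧
    ((p.collider i ∧ p.Z i ∉ G.ancSet (S ∪ {x, y})) ∨
     (¬ p.collider i ∧ p.Z i ∈ S ∧
       (r = SepRule.d ∨
        (p.E i = EKind.fwd ∧ p.Z (i+1) ∉ G.scc (p.Z i)) ∨
        (p.E (i-1) = EKind.bwd ∧ p.Z (i-1) ∉ G.scc (p.Z i)))))

/-- `S` `r`-separates `x` and `y` in `G` -/
def rSep {V : Type u} (G : DMG V) (r : SepRule) (S : Set V) (x y : V) : Prop :=
  ∀ p : MPath V, p.valid G → p.Z 0 = x → p.Z p.k = y → p.blocked G r S x y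

/-- the `r`-independence model of `G` -/
def IM {V : Type u} (G : DMG V) (r : SepRule) : Set (V × V × Set V) :=
  {t | t.1 ≠ t.2.1 ∧ t.1 ∉ t.2.2 ∧ t.2.1 ∉ t.2.2 ∧ rSep G r t.2.2 t.1 t.2.1}

/-- `G` and `H` are `𝓘`-`r`-Markov equivalent -/
def IMEquiv {V : Type u} (G H : DMG V) (r : SepRule) (𝓘 : Set (Set V)) : Prop :=
  ∀ I ∈ 𝓘, IM (G.intervene I) r = IM (H.intervene I) r

/-- a `d`-inducing path between `x` and `y`: every collider is an ancestor of `{x,y}` -/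
def MPath.dInducing {V : Type u} (p : MPath V) (G : DMG V) (x y : V) : Prop :=
  ∀ i, 1 ≤ i → i < p.k → p.collider i → p.Z i ∈ G.ancSet {x, y}

/-- a `σ`-inducing path between `x` and `y` -/
def MPath.sInducing {V : Type u} (p : MPath V) (G : DMG V) (x y : V) : Prop :=
  p.dInducing G x y ∧
  ∀ i, 1 ≤ i → i < p.k → ¬ p.collider i →
    (p.E (i-1) = EKind.bwd → p.Z (i-1) ∈ G.scc (p.Z i)) ∧
    (p.E i = EKind.fwd → p.Z (i+1) ∈ G.scc (p.Z i))

/-- an `r`-inducing path -/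
def MPath.rInducing {V : Type u} (p : MPath V) (G : DMG V) (r : SepRule) (x y : V) : Prop :=
  match r with
  | SepRule.d => p.dInducing G x y
  | SepRule.s => p.sInducing G x y

/-- colored separating system on `(V, C)` -/
def ColoredSepSystem {V : Type u} {γ : Type*} (C : V → γ) (𝓘 : Set (Set V)) : Prop :=
  ∀ X Y : V, C X ≠ C Y → ∃ I ∈ 𝓘, X ∈ I ∧ Y ∉ I

/-- non-adjacent separating system on `(V, D)` -/
def NonAdjSepSystem {V : Type u} (G : DMG V) (𝓘 : Set (Set V)) : Prop :=
  ∀ X Y : V, X ≠ Y → ¬ G.D X Y → ¬ G.D Y X →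
    ∃ I ∈ 𝓘, G.paSet {X, Y} ⊆ I ∧ X ∉ I ∧ Y ∉ I

/-- adjacent separating system on `(V, D)` -/
def AdjSepSystem {V : Type u} (G : DMG V) (𝓘 : Set (Set V)) : Prop :=
  ∀ X Y : V, G.D X Y → ¬ G.D Y X →
    (∃ I ∈ 𝓘, G.paSet {X, Y} \ {X, Y} ⊆ I ∧ X ∉ I ∧ Y ∉ I) ∧
    (∃ I' ∈ 𝓘, G.paSet {X, Y} \ {Y} ⊆ I' ∧ X ∈ I' ∧ Y ∉ I')

/-- the minimum edge clique cover number `cc(H)` -/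
noncomputable def ecc {V : Type u} (H : SimpleGraph V) : ℕ :=
  sInf {K | ∃ C : Fin K → Set V, (∀ k, H.IsClique (C k)) ∧
    ∀ x y : V, H.Adj x y → ∃ k, x ∈ C k ∧ y ∈ C k}

/-- two edges that must receive different colors in a strong edge coloring:
they are distinct and share an endpoint or are both incident to a common third edge -/
def StrongAdjE {V : Type u} (H : SimpleGraph V) (e₁ e₂ : Sym2 V) : Prop :=
  e₁ ≠ e₂ ∧ ((∃ v, v ∈ e₁ ∧ v ∈ e₂) ∨
    ∃ e₃ ∈ H.edgeSet, e₃ ≠ e₁ ∧ e₃ ≠ e₂ ∧ (∃ v, v ∈ e₁ ∧ v ∈ e₃) ∧ ∃ u, u ∈ e₂ ∧ u ∈ e₃)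

/-- the strong edge chromatic number `χ_s(H)` -/
noncomputable def strongChrom {V : Type u} (H : SimpleGraph V) : ℕ :=
  sInf {K | ∃ f : Sym2 V → Fin K, ∀ e₁ ∈ H.edgeSet, ∀ e₂ ∈ H.edgeSet,
    StrongAdjE H e₁ e₂ → f e₁ ≠ f e₂}
section AuxAdjSep

lemma exists_proper_coloring {α : Type*} [Fintype α] (H : SimpleGraph α) (n : ℕ) (hn : 0 < n)
    (hdeg : ∀ v, (H.neighborSet v).ncard < n) :
    ∃ c : α → Fin n, ∀ x y, H.Adj x y → c x ≠ c y := by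
  classical
  suffices h : ∀ s : Finset α, ∃ c : α → Fin n, ∀ x ∈ s, ∀ y ∈ s, H.Adj x y → c x ≠ c y by
    obtain ⟨c, hc⟩ := h Finset.univ
    exact ⟨c, fun x y => hc x (Finset.mem_univ x) y (Finset.mem_univ y)⟩
  intro s
  induction s using Finset.induction_on with
  | empty => exact ⟨fun _ => ⟨0, hn⟩, by simp⟩
  | @insert a s ha ih =>
    obtain ⟨c, hc⟩ := ih
    have hU : (c '' (H.neighborSet a)).ncard < n :=
      lt_of_le_of_lt (Set.ncard_image_le (Set.toFinite _)) (hdeg a)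
    have hex : ∃ k : Fin n, k ∉ c '' H.neighborSet a := by
      by_contra hcon
      push_neg at hcon
      have heq : c '' H.neighborSet a = Set.univ := Set.eq_univ_of_forall hcon
      rw [heq, Set.ncard_univ, Nat.card_eq_fintype_card, Fintype.card_fin] at hU
      omega
    obtain ⟨k, hk⟩ := hex
    refine ⟨Function.update c a k, ?_⟩
    intro x hx y hy hadj
    rcases Finset.mem_insert.mp hx with rfl | hx' <;> rcases Finset.mem_insert.mp hy with rfl | hy'
    · exact absurd hadj (H.loopless.irrefl _)
    · have hyne : y ≠ x := fun h => ha (h ▸ hy')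
      rw [Function.update_self, Function.update_of_ne hyne]
      exact fun h => hk ⟨y, hadj, h.symm⟩
    · have hxne : x ≠ y := fun h => ha (h ▸ hx')
      rw [Function.update_of_ne hxne, Function.update_self]
      exact fun h => hk ⟨x, hadj.symm, h⟩
    · have hxne : x ≠ a := fun h => ha (h ▸ hx')
      have hyne : y ≠ a := fun h => ha (h ▸ hy')
      rw [Function.update_of_ne hxne, Function.update_of_ne hyne]
      exact hc x hx' y hy' hadj

lemma ncard_pairs_le {α β : Type*} [Fintype α] [Fintype β] (W : Set α) (R : α → Set β) (d : ℕ)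
    (h : ∀ w, (R w).ncard ≤ d) :
    ({p : α × β | p.1 ∈ W ∧ p.2 ∈ R p.1}).ncard ≤ W.ncard * d := by
  classical
  rw [Set.ncard_eq_toFinset_card', Set.ncard_eq_toFinset_card']
  have hsub : ({p : α × β | p.1 ∈ W ∧ p.2 ∈ R p.1}).toFinset ⊆
      W.toFinset.biUnion (fun w => (R w).toFinset.image (fun b => (w, b))) := by
    intro p hp
    rw [Set.mem_toFinset] at hp
    simp only [Finset.mem_biUnion, Finset.mem_image, Set.mem_toFinset]
    exact ⟨p.1, hp.1, p.2, hp.2, rfl⟩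
  refine le_trans (Finset.card_le_card hsub) (le_trans Finset.card_biUnion_le ?_)
  calc ∑ w ∈ W.toFinset, ((R w).toFinset.image fun b => (w, b)).card
      ≤ ∑ _w ∈ W.toFinset, d := by
        refine Finset.sum_le_sum (fun w _ => le_trans Finset.card_image_le ?_)
        rw [← Set.ncard_eq_toFinset_card']; exact h w
    _ = W.toFinset.card * d := by rw [Finset.sum_const, smul_eq_mul]

/-- the strong-edge conflict graph on `Sym2 V` -/
def conflictGraph {V : Type u} (G : DMG V) : SimpleGraph (Sym2 V) where
  Adj e₁ e₂ := e₁ ∈ G.skel.edgeSet ∧ e₂ ∈ G.skel.edgeSet ∧ StrongAdjE G.skel e₁ e₂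
  symm := by
    refine ⟨?_⟩
    rintro e₁ e₂ ⟨h1, h2, hne, hcase⟩
    refine ⟨h2, h1, hne.symm, ?_⟩
    rcases hcase with ⟨v, hv1, hv2⟩ | ⟨e₃, he₃, hne1, hne2, hv, hu⟩
    · exact Or.inl ⟨v, hv2, hv1⟩
    · exact Or.inr ⟨e₃, he₃, hne2, hne1, hu, hv⟩
  loopless := ⟨fun e h => h.2.2.1 rfl⟩

lemma conflict_deg_lt {V : Type u} [Fintype V] (G : DMG V) (d : ℕ) (hd1 : 1 ≤ d)
    (hdeg : ∀ x : V, ({y | G.skel.Adj x y}).ncard ≤ d) (e : Sym2 V) :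
    ((conflictGraph G).neighborSet e).ncard < 2 * d ^ 2 := by
  classical
  have hpos : 0 < 2 * d ^ 2 := by nlinarith
  induction e using Sym2.ind with
  | _ x y =>
  by_cases he : G.skel.Adj x y
  swap
  · have hempty : (conflictGraph G).neighborSet s(x, y) = ∅ := by
      ext e'
      simp only [SimpleGraph.mem_neighborSet, Set.mem_empty_iff_false, iff_false]
      exact fun h => he ((SimpleGraph.mem_edgeSet _).mp (show _ ∧ _ from h).1)
    rw [hempty, Set.ncard_empty]
    exact hpos
  · set W : Set V := {w | G.skel.Adj x w} ∪ {w | G.skel.Adj y w} with hWdef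
    set P : Set (V × V) := {p | p.1 ∈ W ∧ G.skel.Adj p.1 p.2} with hPdef
    have hxy : x ≠ y := he.ne
    have hxW : x ∈ W := Or.inr he.symm
    have hyW : y ∈ W := Or.inl he
    have hpairP : ({((x, y) : V × V), (y, x)} : Set (V × V)) ⊆ P := by
      rintro p (rfl | rfl)
      · exact ⟨hxW, he⟩
      · exact ⟨hyW, he.symm⟩
    have hsub : (conflictGraph G).neighborSet s(x, y) ⊆
        Function.uncurry Sym2.mk '' (P \ {((x, y) : V × V), (y, x)}) := by
      intro e' hmem
      obtain ⟨he1, he2, hne, hcase⟩ := hmem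
      -- Step 1: e' has an endpoint in W
      have hW_e' : ∃ w, w ∈ W ∧ w ∈ e' := by
        rcases hcase with ⟨v, hv1, hv2⟩ | ⟨e₃, he₃, hne1, hne2, ⟨v, hv1, hv3⟩, ⟨u, hu2, hu3⟩⟩
        · rcases Sym2.mem_iff.mp hv1 with rfl | rfl
          · exact ⟨v, hxW, hv2⟩
          · exact ⟨v, hyW, hv2⟩
        · by_cases hvu : v = u
          · rcases Sym2.mem_iff.mp hv1 with rfl | rfl
            · exact ⟨u, hvu ▸ hxW, hu2⟩
            · exact ⟨u, hvu ▸ hyW, hu2⟩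
          · have he₃eq : e₃ = s(v, u) := (Sym2.mem_and_mem_iff hvu).mp ⟨hv3, hu3⟩
            have hadj : G.skel.Adj v u := (SimpleGraph.mem_edgeSet _).mp (he₃eq ▸ he₃)
            rcases Sym2.mem_iff.mp hv1 with rfl | rfl
            · exact ⟨u, Or.inl hadj, hu2⟩
            · exact ⟨u, Or.inr hadj, hu2⟩
      obtain ⟨w, hwW, hwe'⟩ := hW_e'
      clear hcase
      induction e' using Sym2.ind with
      | _ a b =>
      have hadj' : G.skel.Adj a b := (SimpleGraph.mem_edgeSet _).mp he2
      have hne1' : (a, b) ≠ (x, y) ∧ (a, b) ≠ (y, x) := by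
        constructor
        · rintro h
          rw [Prod.mk.injEq] at h
          exact hne (by rw [h.1, h.2])
        · rintro h
          rw [Prod.mk.injEq] at h
          exact hne (by rw [h.1, h.2, Sym2.eq_swap])
      have hne2' : (b, a) ≠ (x, y) ∧ (b, a) ≠ (y, x) := by
        constructor
        · rintro h
          rw [Prod.mk.injEq] at h
          exact hne (by rw [h.1, h.2, Sym2.eq_swap])
        · rintro h
          rw [Prod.mk.injEq] at h
          exact hne (by rw [h.1, h.2])
      rcases Sym2.mem_iff.mp hwe' with rfl | rfl
      · refine ⟨(w, b), ⟨⟨hwW, hadj'⟩, ?_⟩, rfl⟩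
        rintro (h | h)
        · exact hne1'.1 h
        · exact hne1'.2 h
      · refine ⟨(w, a), ⟨⟨hwW, hadj'.symm⟩, ?_⟩, Sym2.eq_swap⟩
        rintro (h | h)
        · exact hne2'.1 h
        · exact hne2'.2 h
    have hPle : P.ncard ≤ (d + d) * d := by
      have h1 : P.ncard ≤ W.ncard * d :=
        ncard_pairs_le W (fun w => {u | G.skel.Adj w u}) d (fun w => hdeg w)
      have h2 : W.ncard ≤ d + d :=
        le_trans (Set.ncard_union_le _ _) (add_le_add (hdeg x) (hdeg y))
      exact le_trans h1 (Nat.mul_le_mul_right d h2)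
    have hne_pair : ((x, y) : V × V) ≠ (y, x) := by
      rintro h
      rw [Prod.mk.injEq] at h
      exact hxy h.1
    calc ((conflictGraph G).neighborSet s(x, y)).ncard
        ≤ (Function.uncurry Sym2.mk '' (P \ {((x, y) : V × V), (y, x)})).ncard :=
          Set.ncard_le_ncard hsub (Set.toFinite _)
      _ ≤ (P \ {((x, y) : V × V), (y, x)}).ncard := Set.ncard_image_le (Set.toFinite _)
      _ = P.ncard - 2 := by rw [Set.ncard_diff hpairP, Set.ncard_pair hne_pair]
      _ < 2 * d ^ 2 := by
          have : (d + d) * d = 2 * d ^ 2 := by ring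
          omega

end AuxAdjSep

/-- there is an adjacent separating system on `(V, D)` with at most
`4d²` elements, `d` being the maximum degree of the directed skeleton. -/
theorem adj_separating_system_le_maxdeg {V : Type u} [Fintype V] (G : DMG V) (d : ℕ)
    (hd : IsGreatest {m | ∃ x : V, ({y | G.skel.Adj x y}).ncard = m} d) :
    ∃ 𝓘 : Set (Set V), 𝓘.Finite ∧ AdjSepSystem G 𝓘 ∧ 𝓘.ncard ≤ 4 * d ^ 2 := by
  classical
  obtain hd0 | hd1 := Nat.eq_zero_or_pos d
  · refine ⟨∅, Set.finite_empty, ?_, by simp⟩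
    intro X Y hXY hYX
    exfalso
    have hne : X ≠ Y := fun h => G.D_irrefl X (h ▸ hXY)
    have hY : Y ∈ {y | G.skel.Adj X y} := (show X ≠ Y ∧ (G.D X Y ∨ G.D Y X) from ⟨hne, Or.inl hXY⟩)
    have h1 : 0 < ({y | G.skel.Adj X y}).ncard := (Set.ncard_pos (Set.toFinite _)).mpr ⟨Y, hY⟩
    have h2 := hd.2 ⟨X, rfl⟩
    omega
  · have hdeg : ∀ x : V, ({y | G.skel.Adj x y}).ncard ≤ d := fun x => hd.2 ⟨x, rfl⟩
    obtain ⟨c, hc⟩ := exists_proper_coloring (conflictGraph G) (2 * d ^ 2) (by nlinarith)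
      (conflict_deg_lt G d hd1 hdeg)
    set I : Fin (2 * d ^ 2) → Set V :=
      fun k => {v | ∀ e ∈ G.skel.edgeSet, c e = k → v ∉ e} with hI
    set I' : Fin (2 * d ^ 2) → Set V :=
      fun k => I k ∪ {v | ∃ u, G.D v u ∧ ¬ G.D u v ∧ c s(v, u) = k} with hI'
    have hcardrange : ∀ J : Fin (2 * d ^ 2) → Set V, (Set.range J).ncard ≤ 2 * d ^ 2 := by
      intro J
      rw [← Set.image_univ]
      refine le_trans (Set.ncard_image_le (Set.toFinite _)) ?_
      rw [Set.ncard_univ, Nat.card_eq_fintype_card, Fintype.card_fin]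
    refine ⟨Set.range I ∪ Set.range I',
      (Set.finite_range I).union (Set.finite_range I'), ?_, ?_⟩
    · intro X Y hXY hYX
      have hXne : X ≠ Y := fun h => G.D_irrefl X (h ▸ hXY)
      have heXY : s(X, Y) ∈ G.skel.edgeSet := (show X ≠ Y ∧ (G.D X Y ∨ G.D Y X) from ⟨hXne, Or.inl hXY⟩)
      set k := c s(X, Y) with hk
      have hpar : ∀ Z, Z ≠ X → Z ≠ Y → (G.D Z X ∨ G.D Z Y) → Z ∈ I k := by
        intro Z hZX hZY hZD
        intro e' he' hce' hZe'
        have hne' : s(X, Y) ≠ e' := by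
          intro h
          rw [← h] at hZe'
          rcases Sym2.mem_iff.mp hZe' with h' | h'
          exacts [hZX h', hZY h']
        obtain ⟨A, hAD, hAmem⟩ : ∃ A, G.D Z A ∧ (A = X ∨ A = Y) := by
          rcases hZD with h | h
          exacts [⟨X, h, Or.inl rfl⟩, ⟨Y, h, Or.inr rfl⟩]
        have hZA : Z ≠ A := by
          rcases hAmem with rfl | rfl
          exacts [hZX, hZY]
        have hadjZA : s(Z, A) ∈ G.skel.edgeSet := (show Z ≠ A ∧ (G.D Z A ∨ G.D A Z) from ⟨hZA, Or.inl hAD⟩)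
        have hAe : A ∈ s(X, Y) := by
          rcases hAmem with rfl | rfl
          exacts [Sym2.mem_mk_left A Y, Sym2.mem_mk_right X A]
        have hstrong : StrongAdjE G.skel s(X, Y) e' := by
          refine ⟨hne', ?_⟩
          by_cases h3 : s(Z, A) = e'
          · exact Or.inl ⟨A, hAe, h3 ▸ Sym2.mem_mk_right Z A⟩
          · have h4 : s(Z, A) ≠ s(X, Y) := by
              intro h
              have hZmem : Z ∈ s(X, Y) := h ▸ Sym2.mem_mk_left Z A
              rcases Sym2.mem_iff.mp hZmem with h' | h'
              exacts [hZX h', hZY h']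
            exact Or.inr ⟨s(Z, A), hadjZA, h4, h3,
              ⟨A, hAe, Sym2.mem_mk_right Z A⟩, ⟨Z, hZe', Sym2.mem_mk_left Z A⟩⟩
        exact hc s(X, Y) e' (show s(X, Y) ∈ G.skel.edgeSet ∧ e' ∈ G.skel.edgeSet ∧ StrongAdjE G.skel s(X, Y) e' from ⟨heXY, he', hstrong⟩) (hk.symm.trans hce'.symm)
      have hXnotI : X ∉ I k := fun hXI => hXI s(X, Y) heXY hk.symm (Sym2.mem_mk_left X Y)
      have hYnotI : Y ∉ I k := fun hYI => hYI s(X, Y) heXY hk.symm (Sym2.mem_mk_right X Y)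
      have hYnotI' : Y ∉ I' k := by
        rintro (hYI | ⟨U, hYU, hUY, hcYU⟩)
        · exact hYnotI hYI
        · have hYne : Y ≠ U := fun h => G.D_irrefl Y (h ▸ hYU)
          have heYU : s(Y, U) ∈ G.skel.edgeSet := (show Y ≠ U ∧ (G.D Y U ∨ G.D U Y) from ⟨hYne, Or.inl hYU⟩)
          by_cases hEq : s(Y, U) = s(X, Y)
          · rw [Sym2.eq_iff] at hEq
            rcases hEq with ⟨h1, h2⟩ | ⟨h1, h2⟩
            · exact hXne h1.symm
            · exact hYX (h2 ▸ hYU)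
          · have hstrong : StrongAdjE G.skel s(X, Y) s(Y, U) :=
              ⟨fun h => hEq h.symm,
                Or.inl ⟨Y, Sym2.mem_mk_right X Y, Sym2.mem_mk_left Y U⟩⟩
            exact hc s(X, Y) s(Y, U) (show s(X, Y) ∈ G.skel.edgeSet ∧ s(Y, U) ∈ G.skel.edgeSet ∧ StrongAdjE G.skel s(X, Y) s(Y, U) from ⟨heXY, heYU, hstrong⟩) (hk.symm.trans hcYU.symm)
      constructor
      · refine ⟨I k, Or.inl ⟨k, rfl⟩, ?_, hXnotI, hYnotI⟩
        rintro Z ⟨⟨x', hx', hZD⟩, hZnot⟩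
        simp only [Set.mem_insert_iff, Set.mem_singleton_iff, not_or] at hZnot
        simp only [Set.mem_insert_iff, Set.mem_singleton_iff] at hx'
        refine hpar Z hZnot.1 hZnot.2 ?_
        rcases hx' with rfl | rfl
        exacts [Or.inl hZD, Or.inr hZD]
      · refine ⟨I' k, Or.inr ⟨k, rfl⟩, ?_, Or.inr ⟨Y, hXY, hYX, hk.symm⟩, hYnotI'⟩
        rintro Z ⟨⟨x', hx', hZD⟩, hZnot⟩
        simp only [Set.mem_singleton_iff] at hZnot
        simp only [Set.mem_insert_iff, Set.mem_singleton_iff] at hx'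
        by_cases hZX : Z = X
        · exact Or.inr ⟨Y, hZX ▸ hXY, hZX ▸ hYX, hZX ▸ hk.symm⟩
        · refine Or.inl (hpar Z hZX hZnot ?_)
          rcases hx' with rfl | rfl
          exacts [Or.inl hZD, Or.inr hZD]
    · refine le_trans (Set.ncard_union_le _ _) ?_
      have h1 := hcardrange I
      have h2 := hcardrange I'
      omega
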